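/- Let H be a weak Hopf algebra over a field k, A a unital associative k-algebra, and ρ : H⊗A → A a weak measure such that ρ(1_H⊗a) = a and ρ(hg⊗1_A) = ρ(h ⊗ ρ(g⊗1_A)) for all h,g ∈ H, a ∈ A. Then ρ(Π^L(h)⊗a) = ρ(h⊗1_A)·a for all h ∈ H and a ∈ A; in particular A is a left weak H-module algebra via ρ. -/

import Mathlib

/-!
Common framework: weak bialgebras, weak Hopf algebras, weak measures and
unitary weak crossed products, formalized via linear maps over a field `k`.
Sweedler sums are expressed by composites of canonical linear maps.
-/

open TensorProduct

set_option autoImplicit false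
set_option maxHeartbeats 1000000

noncomputable section

namespace WeakCrossed

variable (k : Type*) [Field k]
variable (H : Type*) [Ring H] [Algebra k H] [Coalgebra k H]
variable (A : Type*) [Ring A] [Algebra k A]

/-- The comultiplication of `H`. -/
abbrev comulH : H →ₗ[k] H ⊗[k] H := Coalgebra.comul

/-- The counit of `H`. -/
abbrev counitH : H →ₗ[k] k := Coalgebra.counit

/-- The rearrangement `(M ⊗ N) ⊗ P ≃ (M ⊗ P) ⊗ N`. -/
def rightComm (M N P : Type*) [AddCommGroup M] [AddCommGroup N] [AddCommGroup P]
    [Module k M] [Module k N] [Module k P] :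
    (M ⊗[k] N) ⊗[k] P ≃ₗ[k] (M ⊗[k] P) ⊗[k] N :=
  TensorProduct.assoc k M N P ≪≫ₗ
    TensorProduct.congr (LinearEquiv.refl k M) (TensorProduct.comm k N P) ≪≫ₗ
      (TensorProduct.assoc k M P N).symm

/-- The comultiplication of the tensor product coalgebra `H ⊗ H`:
`h ⊗ g ↦ Σ (h₍₁₎ ⊗ g₍₁₎) ⊗ (h₍₂₎ ⊗ g₍₂₎)`. -/
def comul2 : H ⊗[k] H →ₗ[k] (H ⊗[k] H) ⊗[k] (H ⊗[k] H) :=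
  (TensorProduct.tensorTensorTensorComm k H H H H).toLinearMap ∘ₗ
    TensorProduct.map (comulH k H) (comulH k H)

/-- Iterated comultiplication `h ↦ Σ (h₍₁₎ ⊗ h₍₂₎) ⊗ h₍₃₎`. -/
def comul3H : H →ₗ[k] (H ⊗[k] H) ⊗[k] H :=
  LinearMap.rTensor H (comulH k H) ∘ₗ comulH k H

/-- The comultiplication of the tensor product coalgebra `(H ⊗ H) ⊗ H`. -/
def comul3 : (H ⊗[k] H) ⊗[k] H →ₗ[k]
    ((H ⊗[k] H) ⊗[k] H) ⊗[k] ((H ⊗[k] H) ⊗[k] H) :=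
  (TensorProduct.tensorTensorTensorComm k (H ⊗[k] H) (H ⊗[k] H) H H).toLinearMap ∘ₗ
    TensorProduct.map (comul2 k H) (comulH k H)

/-- The target map `Π^L(h) = Σ ε(1₍₁₎ h) 1₍₂₎`. -/
def piL : H →ₗ[k] H :=
  (TensorProduct.lid k H).toLinearMap ∘ₗ
    TensorProduct.map (counitH k H) (LinearMap.id : H →ₗ[k] H) ∘ₗ
      LinearMap.mulLeft k (comulH k H 1) ∘ₗ (TensorProduct.mk k H H).flip 1

/-- The source map `Π^R(h) = Σ 1₍₁₎ ε(h 1₍₂₎)`. -/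
def piR : H →ₗ[k] H :=
  (TensorProduct.rid k H).toLinearMap ∘ₗ
    TensorProduct.map (LinearMap.id : H →ₗ[k] H) (counitH k H) ∘ₗ
      LinearMap.mulRight k (comulH k H 1) ∘ₗ TensorProduct.mk k H H 1

/-- The axioms of a weak bialgebra:  `Δ` is multiplicative, the weak counit
axiom `ε(xyz) = Σ ε(x y₍₁₎) ε(y₍₂₎ z) = Σ ε(x y₍₂₎) ε(y₍₁₎ z)` holds, and the
weak unit axiom
`(Δ⊗id)(Δ(1)) = (Δ(1)⊗1)(1⊗Δ(1)) = (1⊗Δ(1))(Δ(1)⊗1)` holds. -/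
structure IsWeakBialgebra : Prop where
  comul_mul : ∀ x y : H, comulH k H (x * y) = comulH k H x * comulH k H y
  counit_mul : ∀ x y z : H,
    counitH k H (x * y * z) =
      (LinearMap.mul' k k ∘ₗ TensorProduct.map
        (counitH k H ∘ₗ LinearMap.mulLeft k x)
        (counitH k H ∘ₗ LinearMap.mulRight k z)) (comulH k H y)
  counit_mul_op : ∀ x y z : H,
    counitH k H (x * y * z) =
      (LinearMap.mul' k k ∘ₗ TensorProduct.map
        (counitH k H ∘ₗ LinearMap.mulLeft k x)
        (counitH k H ∘ₗ LinearMap.mulRight k z))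
        (TensorProduct.comm k H H (comulH k H y))
  comul_one_left :
    comul3H k H 1 =
      (comulH k H 1 ⊗ₜ[k] (1 : H)) *
        (TensorProduct.assoc k H H H).symm ((1 : H) ⊗ₜ[k] comulH k H 1)
  comul_one_right :
    comul3H k H 1 =
      ((TensorProduct.assoc k H H H).symm ((1 : H) ⊗ₜ[k] comulH k H 1)) *
        (comulH k H 1 ⊗ₜ[k] (1 : H))

/-- The axioms of an antipode of a weak Hopf algebra:
`Σ h₍₁₎ S(h₍₂₎) = Π^L(h)`, `Σ S(h₍₁₎) h₍₂₎ = Π^R(h)` and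
`Σ S(h₍₁₎) h₍₂₎ S(h₍₃₎) = S(h)`. -/
structure IsWeakHopf (S : H →ₗ[k] H) : Prop where
  antipode_left : ∀ h : H,
    LinearMap.mul' k H (LinearMap.lTensor H S (comulH k H h)) = piL k H h
  antipode_right : ∀ h : H,
    LinearMap.mul' k H (LinearMap.rTensor H S (comulH k H h)) = piR k H h
  antipode_mid : ∀ h : H,
    LinearMap.mul' k H
      (TensorProduct.map (LinearMap.mul' k H ∘ₗ LinearMap.rTensor H S) S
        (comul3H k H h)) = S h

variable {k H A}

/-- `h ↦ ρ(h ⊗ a)`. -/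
def rhoAt (ρ : H ⊗[k] A →ₗ[k] A) (a : A) : H →ₗ[k] A :=
  ρ ∘ₗ (TensorProduct.mk k H A).flip a

/-- `ρ` is a weak measure of `H` on `A`:
`ρ(h ⊗ ab) = Σ ρ(h₍₁₎ ⊗ a) ρ(h₍₂₎ ⊗ b)`. -/
def IsWeakMeasure (ρ : H ⊗[k] A →ₗ[k] A) : Prop :=
  ∀ (h : H) (a b : A),
    ρ (h ⊗ₜ[k] (a * b)) =
      (LinearMap.mul' k A ∘ₗ TensorProduct.map ρ ρ)
        (TensorProduct.tensorTensorTensorComm k H H A A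
          (comulH k H h ⊗ₜ[k] (a ⊗ₜ[k] b)))

/-- Convolution product on `Hom(H, B)`: `(α * β)(h) = Σ α(h₍₁₎) β(h₍₂₎)`. -/
def conv1 {B : Type*} [Ring B] [Algebra k B] (α β : H →ₗ[k] B) : H →ₗ[k] B :=
  LinearMap.mul' k B ∘ₗ TensorProduct.map α β ∘ₗ comulH k H

/-- Convolution product on `Hom(H ⊗ H, A)` with respect to the tensor product
coalgebra structure of `H ⊗ H`. -/
def conv2 (α β : H ⊗[k] H →ₗ[k] A) : H ⊗[k] H →ₗ[k] A :=
  LinearMap.mul' k A ∘ₗ TensorProduct.map α β ∘ₗ comul2 k H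

/-- `(h, g) ↦ Σ α(h₍₁₎ ⊗ g₍₁₎) ε(h₍₂₎ g₍₂₎)`. -/
def convCounitR (α : H ⊗[k] H →ₗ[k] A) : H ⊗[k] H →ₗ[k] A :=
  (TensorProduct.rid k A).toLinearMap ∘ₗ
    TensorProduct.map α (counitH k H ∘ₗ LinearMap.mul' k H) ∘ₗ comul2 k H

/-- `(h, g) ↦ Σ ε(h₍₁₎ g₍₁₎) α(h₍₂₎ ⊗ g₍₂₎)`. -/
def convCounitL (α : H ⊗[k] H →ₗ[k] A) : H ⊗[k] H →ₗ[k] A :=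
  (TensorProduct.lid k A).toLinearMap ∘ₗ
    TensorProduct.map (counitH k H ∘ₗ LinearMap.mul' k H) α ∘ₗ comul2 k H

/-- `L(φ)(a ⊗ h) = Σ a φ(h₍₁₎) ⊗ h₍₂₎`. -/
def Lmap (φ : H →ₗ[k] A) : A ⊗[k] H →ₗ[k] A ⊗[k] H :=
  LinearMap.rTensor H (LinearMap.mul' k A ∘ₗ LinearMap.lTensor A φ) ∘ₗ
    (TensorProduct.assoc k A H H).symm.toLinearMap ∘ₗ
      LinearMap.lTensor A (comulH k H)

/-- The idempotent `∇_ρ(a ⊗ h) = Σ a ρ(h₍₁₎ ⊗ 1) ⊗ h₍₂₎`. -/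
def nablaRho (ρ : H ⊗[k] A →ₗ[k] A) : A ⊗[k] H →ₗ[k] A ⊗[k] H :=
  Lmap (rhoAt ρ 1)

/-- The twisting map `χ_ρ(h ⊗ a) = Σ ρ(h₍₁₎ ⊗ a) ⊗ h₍₂₎`. -/
def chiRho (ρ : H ⊗[k] A →ₗ[k] A) : H ⊗[k] A →ₗ[k] A ⊗[k] H :=
  LinearMap.rTensor H ρ ∘ₗ (rightComm k H H A).toLinearMap ∘ₗ
    LinearMap.rTensor A (comulH k H)

/-- The preunit `ν = Σ ρ(1₍₁₎ ⊗ 1_A) ⊗ 1₍₂₎ ∈ A ⊗ H`. -/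
def nu (ρ : H ⊗[k] A →ₗ[k] A) : A ⊗[k] H :=
  chiRho ρ ((1 : H) ⊗ₜ[k] (1 : A))

/-- `F_f(h ⊗ g) = Σ f(h₍₁₎ ⊗ g₍₁₎) ⊗ h₍₂₎ g₍₂₎`. -/
def Fmap (f : H ⊗[k] H →ₗ[k] A) : H ⊗[k] H →ₗ[k] A ⊗[k] H :=
  TensorProduct.map f (LinearMap.mul' k H) ∘ₗ comul2 k H

/-- The twisted module condition:
`Σ f(h₍₁₎⊗g₍₁₎) ρ(h₍₂₎g₍₂₎⊗a) = Σ ρ(h₍₁₎ ⊗ ρ(g₍₁₎⊗a)) f(h₍₂₎⊗g₍₂₎)`. -/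
def IsTwistedModule (ρ : H ⊗[k] A →ₗ[k] A) (f : H ⊗[k] H →ₗ[k] A) : Prop :=
  ∀ a : A,
    conv2 f (rhoAt ρ a ∘ₗ LinearMap.mul' k H) =
      conv2 (ρ ∘ₗ LinearMap.lTensor H (rhoAt ρ a)) f

/-- The cocycle condition:
`Σ f(h₍₁₎⊗g₍₁₎) f(h₍₂₎g₍₂₎⊗l) = Σ ρ(h₍₁₎ ⊗ f(g₍₁₎⊗l₍₁₎)) f(h₍₂₎ ⊗ g₍₂₎l₍₂₎)`. -/
def IsCocycle (ρ : H ⊗[k] A →ₗ[k] A) (f : H ⊗[k] H →ₗ[k] A) : Prop :=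
  LinearMap.mul' k A ∘ₗ
      TensorProduct.map f (f ∘ₗ LinearMap.rTensor H (LinearMap.mul' k H)) ∘ₗ
        (TensorProduct.assoc k (H ⊗[k] H) (H ⊗[k] H) H).toLinearMap ∘ₗ
          LinearMap.rTensor H (comul2 k H) =
    LinearMap.mul' k A ∘ₗ
      TensorProduct.map
        (ρ ∘ₗ LinearMap.lTensor H f ∘ₗ (TensorProduct.assoc k H H H).toLinearMap)
        (f ∘ₗ LinearMap.lTensor H (LinearMap.mul' k H) ∘ₗ
          (TensorProduct.assoc k H H H).toLinearMap) ∘ₗ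
        comul3 k H

/-- The data `(ρ, f)` of a unitary weak crossed product, i.e. conditions
(i)–(v) of the paper: `ρ` is a weak measure, `f` is normalized
(`f(h⊗g) = Σ f(h₍₁₎⊗g₍₁₎) ρ(h₍₂₎g₍₂₎⊗1)`), `f` is a cocycle satisfying the
twisted module condition, and the preunit conditions for
`ν = Σ ρ(1₍₁₎⊗1)⊗1₍₂₎` hold. -/
structure IsCrossedProdData (ρ : H ⊗[k] A →ₗ[k] A) (f : H ⊗[k] H →ₗ[k] A) : Prop where
  measure : IsWeakMeasure ρ
  normal : f = conv2 f (rhoAt ρ 1 ∘ₗ LinearMap.mul' k H)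
  twisted : IsTwistedModule ρ f
  cocycle : IsCocycle ρ f
  preunit_left : ∀ h : H,
    rhoAt ρ 1 h =
      (LinearMap.mul' k A ∘ₗ TensorProduct.map ρ f)
        (TensorProduct.tensorTensorTensorComm k H H A H
          (comulH k H h ⊗ₜ[k] nu ρ))
  preunit_right : ∀ h : H,
    rhoAt ρ 1 h =
      (LinearMap.mul' k A ∘ₗ
        LinearMap.lTensor A (f ∘ₗ (TensorProduct.mk k H H).flip h)) (nu ρ)
  preunit_mid : ∀ a : A,
    Lmap (rhoAt ρ a) (nu ρ) =
      LinearMap.rTensor H (LinearMap.mulLeft k a) (nu ρ)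

/-- `E = A ×_ρ^f H`, the image of the idempotent `∇_ρ`. -/
abbrev CrossE (ρ : H ⊗[k] A →ₗ[k] A) : Submodule k (A ⊗[k] H) :=
  LinearMap.range (nablaRho ρ)

/-- The inclusion `ι : E → A ⊗ H`. -/
def iotaE (ρ : H ⊗[k] A →ₗ[k] A) : CrossE ρ →ₗ[k] A ⊗[k] H :=
  (CrossE ρ).subtype

/-- The projection `p : A ⊗ H → E`, the corestriction of `∇_ρ`. -/
def pE (ρ : H ⊗[k] A →ₗ[k] A) : A ⊗[k] H →ₗ[k] CrossE ρ :=
  (nablaRho ρ).rangeRestrict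

/-- The product `μ♯((a⊗h)⊗(b⊗g)) = Σ a ρ(h₍₁₎⊗b) f(h₍₂₎⊗g₍₁₎) ⊗ h₍₃₎g₍₂₎`. -/
def muSharp (ρ : H ⊗[k] A →ₗ[k] A) (f : H ⊗[k] H →ₗ[k] A) :
    (A ⊗[k] H) ⊗[k] (A ⊗[k] H) →ₗ[k] A ⊗[k] H :=
  LinearMap.rTensor H (LinearMap.mul' k A) ∘ₗ
  (TensorProduct.assoc k A A H).symm.toLinearMap ∘ₗ
  LinearMap.lTensor A
    (LinearMap.rTensor H (LinearMap.mul' k A) ∘ₗ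
     (TensorProduct.assoc k A A H).symm.toLinearMap ∘ₗ
     LinearMap.lTensor A (Fmap f) ∘ₗ
     (TensorProduct.assoc k A H H).toLinearMap ∘ₗ
     LinearMap.rTensor H (chiRho ρ) ∘ₗ
     (TensorProduct.assoc k H A H).symm.toLinearMap) ∘ₗ
  (TensorProduct.assoc k A H (A ⊗[k] H)).toLinearMap

/-- The product of the unitary crossed product `E = A ×_ρ^f H`. -/
def crossMul (ρ : H ⊗[k] A →ₗ[k] A) (f : H ⊗[k] H →ₗ[k] A) (x y : CrossE ρ) :
    CrossE ρ :=
  pE ρ (muSharp ρ f (iotaE ρ x ⊗ₜ[k] iotaE ρ y))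

/-- The product of the crossed product as a linear map. -/
def mulE (ρ : H ⊗[k] A →ₗ[k] A) (f : H ⊗[k] H →ₗ[k] A) :
    CrossE ρ ⊗[k] CrossE ρ →ₗ[k] CrossE ρ :=
  pE ρ ∘ₗ muSharp ρ f ∘ₗ TensorProduct.map (iotaE ρ) (iotaE ρ)

/-- The unit `1_E = p(ν)` of the crossed product. -/
def crossOne (ρ : H ⊗[k] A →ₗ[k] A) : CrossE ρ := pE ρ (nu ρ)

/-- `γ(h) = p(1_A ⊗ h)`. -/
def gammaE (ρ : H ⊗[k] A →ₗ[k] A) : H →ₗ[k] CrossE ρ :=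
  pE ρ ∘ₗ TensorProduct.mk k A H 1

/-- `a ↦ Σ a ν_A ⊗ ν_H`. -/
def jnuAux (ρ : H ⊗[k] A →ₗ[k] A) : A →ₗ[k] A ⊗[k] H :=
  LinearMap.rTensor H (LinearMap.mul' k A) ∘ₗ
    (TensorProduct.assoc k A A H).symm.toLinearMap ∘ₗ
      (TensorProduct.mk k A (A ⊗[k] H)).flip (nu ρ)

/-- `j_ν(a) = p(Σ a ν_A ⊗ ν_H)`. -/
def jnuE (ρ : H ⊗[k] A →ₗ[k] A) : A →ₗ[k] CrossE ρ := pE ρ ∘ₗ jnuAux ρ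

/-- The left action `a ▸ (b ⊗ h) = ab ⊗ h` of `A` on `A ⊗ H`. -/
def aAct (a : A) : A ⊗[k] H →ₗ[k] A ⊗[k] H :=
  LinearMap.rTensor H (LinearMap.mulLeft k a)

/-- The comodule structure `δ_E = (p ⊗ id) ∘ (id ⊗ Δ) ∘ ι` of the crossed
product. -/
def deltaE (ρ : H ⊗[k] A →ₗ[k] A) : CrossE ρ →ₗ[k] CrossE ρ ⊗[k] H :=
  LinearMap.rTensor H (pE ρ) ∘ₗ
    (TensorProduct.assoc k A H H).symm.toLinearMap ∘ₗ
      LinearMap.lTensor A (comulH k H) ∘ₗ iotaE ρ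

/-- The componentwise product `(x⊗h)(y⊗g) = x·y ⊗ hg` on `E ⊗ H`. -/
def mulEH (ρ : H ⊗[k] A →ₗ[k] A) (f : H ⊗[k] H →ₗ[k] A) :
    (CrossE ρ ⊗[k] H) ⊗[k] (CrossE ρ ⊗[k] H) →ₗ[k] CrossE ρ ⊗[k] H :=
  TensorProduct.map (mulE ρ f) (LinearMap.mul' k H) ∘ₗ
    (TensorProduct.tensorTensorTensorComm k (CrossE ρ) H (CrossE ρ) H).toLinearMap

/-- Convolution on `Hom(H, E)` using the crossed product multiplication. -/
def convE (ρ : H ⊗[k] A →ₗ[k] A) (f : H ⊗[k] H →ₗ[k] A)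
    (α β : H →ₗ[k] CrossE ρ) : H →ₗ[k] CrossE ρ :=
  mulE ρ f ∘ₗ TensorProduct.map α β ∘ₗ comulH k H

/-- `γ⁻¹(h) = Σ j_ν(f⁻¹(S(h₍₁₎)₍₁₎ ⊗ h₍₂₎)) · γ(S(h₍₁₎)₍₂₎)`. -/
def gammaInv (ρ : H ⊗[k] A →ₗ[k] A) (f : H ⊗[k] H →ₗ[k] A)
    (S : H →ₗ[k] H) (fi : H ⊗[k] H →ₗ[k] A) : H →ₗ[k] CrossE ρ :=
  mulE ρ f ∘ₗ
    TensorProduct.map (jnuE ρ ∘ₗ fi) (gammaE ρ) ∘ₗ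
      (rightComm k H H H).toLinearMap ∘ₗ
        LinearMap.rTensor H (comulH k H) ∘ₗ
          LinearMap.rTensor H S ∘ₗ comulH k H

/-- `(id ⊗ ε) : A ⊗ H → A`. -/
def epsA : A ⊗[k] H →ₗ[k] A :=
  (TensorProduct.rid k A).toLinearMap ∘ₗ LinearMap.lTensor A (counitH k H)

/-- Right `H`-comodule algebra structure on a unital algebra `B`. -/
structure IsComodAlg {B : Type*} [Ring B] [Algebra k B]
    (δB : B →ₗ[k] B ⊗[k] H) : Prop where
  counit : ∀ b : B,
    (TensorProduct.rid k B) (LinearMap.lTensor B (counitH k H) (δB b)) = b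
  coassoc : (TensorProduct.assoc k B H H).toLinearMap ∘ₗ
      LinearMap.rTensor H δB ∘ₗ δB = LinearMap.lTensor B (comulH k H) ∘ₗ δB
  mul_compat : ∀ x y : B, δB (x * y) = δB x * δB y
  one_compat : LinearMap.lTensor B (piL k H) (δB 1) = δB 1

/-- `(B, j)` is an `H`-cleft extension of `A`, with cleaving map `γ` and
convolution inverse `γi`. -/
structure IsCleft {B : Type*} [Ring B] [Algebra k B]
    (δB : B →ₗ[k] B ⊗[k] H) (j : A →ₗ[k] B) (γ γi : H →ₗ[k] B) : Prop where
  comodAlg : IsComodAlg δB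
  j_mul : ∀ a b : A, j (a * b) = j a * j b
  j_one : j 1 = 1
  j_inj : Function.Injective j
  j_equalizes : ∀ a : A,
    LinearMap.lTensor B (piL k H) (δB (j a)) = δB (j a)
  j_equalizer : ∀ (X : Type*) [AddCommGroup X] [Module k X] (g : X →ₗ[k] B),
    (∀ x : X, LinearMap.lTensor B (piL k H) (δB (g x)) = δB (g x)) →
      ∃! g' : X →ₗ[k] A, j ∘ₗ g' = g
  colinear : ∀ h : H, δB (γ h) = LinearMap.rTensor H γ (comulH k H h)
  total : γ 1 = 1
  inv_left : conv1 γi γ = γ ∘ₗ piR k H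
  inv_right : conv1 γ γi = γ ∘ₗ piL k H
  inv_norm : conv1 (γ ∘ₗ piR k H) γi = γi
  factors : ∃ t : H →ₗ[k] A, γ ∘ₗ piL k H = j ∘ₗ t

/-- `q(x) = Σ x₍₀₎ γ⁻¹(x₍₁₎)`. -/
def qMap {B : Type*} [Ring B] [Algebra k B]
    (δB : B →ₗ[k] B ⊗[k] H) (γi : H →ₗ[k] B) : B →ₗ[k] B :=
  LinearMap.mul' k B ∘ₗ LinearMap.lTensor B γi ∘ₗ δB

/-- `ρ(h ⊗ a) = p(γ(h) j(a))`. -/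
def cleftRho {B : Type*} [Ring B] [Algebra k B]
    (γ : H →ₗ[k] B) (j : A →ₗ[k] B) (p : B →ₗ[k] A) : H ⊗[k] A →ₗ[k] A :=
  p ∘ₗ LinearMap.mul' k B ∘ₗ TensorProduct.map γ j

/-- `f(h ⊗ g) = p(γ(h) γ(g))`. -/
def cleftF {B : Type*} [Ring B] [Algebra k B]
    (γ : H →ₗ[k] B) (p : B →ₗ[k] A) : H ⊗[k] H →ₗ[k] A :=
  p ∘ₗ LinearMap.mul' k B ∘ₗ TensorProduct.map γ γ

/-- `w(a ⊗ h) = j(a) γ(h)`. -/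
def wMap {B : Type*} [Ring B] [Algebra k B]
    (j : A →ₗ[k] B) (γ : H →ₗ[k] B) : A ⊗[k] H →ₗ[k] B :=
  LinearMap.mul' k B ∘ₗ TensorProduct.map j γ

end WeakCrossed

namespace WeakCrossed


section Aux

variable {k : Type*} [Field k]
variable {H : Type*} [Ring H] [Algebra k H] [Coalgebra k H]
variable {A : Type*} [Ring A] [Algebra k A]

open Coalgebra

set_option synthInstance.maxHeartbeats 1000000

/-- Pointwise form of the weak measure condition. -/
lemma measure_repr {ρ : H ⊗[k] A →ₗ[k] A} (hρ : IsWeakMeasure ρ)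
    {h : H} (r : Coalgebra.Repr k h (H × H)) (a b : A) :
    ρ (h ⊗ₜ[k] (a * b)) =
      ∑ i ∈ r.index, ρ (r.left i ⊗ₜ[k] a) * ρ (r.right i ⊗ₜ[k] b) := by
  rw [hρ h a b, ← r.eq]
  simp [TensorProduct.sum_tmul, TensorProduct.tensorTensorTensorComm_tmul,
    LinearMap.mul'_apply]

/-- Pointwise form of `piL`. -/
lemma piL_repr (r : Coalgebra.Repr k (1 : H) (H × H)) (h : H) :
    piL k H h = ∑ i ∈ r.index, counitH k H (r.left i * h) • r.right i := by
  unfold piL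
  simp only [LinearMap.coe_comp, Function.comp_apply, LinearEquiv.coe_coe,
    LinearMap.flip_apply, TensorProduct.mk_apply]
  rw [show comulH k H 1 = CoalgebraStruct.comul (1:H) from rfl, ← r.eq]
  simp [LinearMap.mulLeft_apply, Finset.sum_mul, Algebra.TensorProduct.tmul_mul_tmul,
    TensorProduct.map_tmul, TensorProduct.lid_tmul]

/-- Pointwise form of the antipode-left axiom. -/
lemma antipode_left_repr {S : H →ₗ[k] H} (hS : IsWeakHopf k H S)
    {h : H} (r : Coalgebra.Repr k h (H × H)) :
    ∑ i ∈ r.index, r.left i * S (r.right i) = piL k H h := by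
  have := hS.antipode_left h
  rw [show comulH k H h = CoalgebraStruct.comul h from rfl, ← r.eq] at this
  simpa [LinearMap.mul'_apply] using this

/-- Pointwise form of the right weak-unit axiom (A3'). -/
lemma comul_one_right_repr (hWB : IsWeakBialgebra k H)
    (r : Coalgebra.Repr k (1 : H) (H × H)) :
    ∑ i ∈ r.index, (CoalgebraStruct.comul (r.left i) : H ⊗[k] H) ⊗ₜ[k] r.right i
      = ∑ i ∈ r.index, ∑ j ∈ r.index,
          ((r.left i) ⊗ₜ[k] (r.left j * r.right i)) ⊗ₜ[k] r.right j := by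
  have h1 : (LinearMap.rTensor H (CoalgebraStruct.comul : H →ₗ[k] H ⊗[k] H))
      (CoalgebraStruct.comul (1 : H))
      = ∑ i ∈ r.index, (CoalgebraStruct.comul (r.left i) : H ⊗[k] H) ⊗ₜ[k] r.right i := by
    rw [← r.eq]; simp [map_sum]
  have := hWB.comul_one_right
  unfold comul3H at this
  rw [show (comulH k H : H →ₗ[k] H ⊗[k] H) = CoalgebraStruct.comul from rfl] at this
  rw [LinearMap.comp_apply] at this
  rw [h1, ← r.eq] at this
  simp only [TensorProduct.tmul_sum, TensorProduct.sum_tmul, map_sum,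
    TensorProduct.assoc_symm_tmul, Finset.sum_mul, Finset.mul_sum,
    Algebra.TensorProduct.tmul_mul_tmul, one_mul, mul_one] at this
  exact this

/-- Coassociated form of `comul_one_right_repr` ((id ⊗ Δ)Δ(1)). -/
lemma comul_one_right_repr' (hWB : IsWeakBialgebra k H)
    (r : Coalgebra.Repr k (1 : H) (H × H)) :
    ∑ i ∈ r.index, r.left i ⊗ₜ[k] (CoalgebraStruct.comul (r.right i) : H ⊗[k] H)
      = ∑ i ∈ r.index, ∑ j ∈ r.index,
          r.left i ⊗ₜ[k] ((r.left j * r.right i) ⊗ₜ[k] r.right j) := by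
  have h2 := congrArg (TensorProduct.assoc k H H H) (comul_one_right_repr hWB r)
  simp only [map_sum, TensorProduct.assoc_tmul] at h2
  rw [← h2]
  have h3 : (∑ i ∈ r.index, (TensorProduct.assoc k H H H)
      ((CoalgebraStruct.comul (r.left i) : H ⊗[k] H) ⊗ₜ[k] r.right i))
      = (TensorProduct.assoc k H H H) ((LinearMap.rTensor H
          (CoalgebraStruct.comul : H →ₗ[k] H ⊗[k] H))
          (∑ i ∈ r.index, r.left i ⊗ₜ[k] r.right i)) := by
    simp [map_sum]
  rw [h3, r.eq, Coalgebra.coassoc_apply (1 : H), ← r.eq]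
  simp [map_sum]

/-- Comultiplication of `piL h`. -/
lemma comul_piL (hWB : IsWeakBialgebra k H) (r : Coalgebra.Repr k (1 : H) (H × H)) (h : H) :
    (CoalgebraStruct.comul (piL k H h) : H ⊗[k] H)
      = ∑ j ∈ r.index, (r.left j * piL k H h) ⊗ₜ[k] r.right j := by
  have key := congrArg ((TensorProduct.lid k (H ⊗[k] H)).toLinearMap ∘ₗ
      LinearMap.rTensor (H ⊗[k] H) (counitH k H ∘ₗ LinearMap.mulRight k h))
    (comul_one_right_repr' hWB r)
  simp only [map_sum, LinearMap.coe_comp, LinearEquiv.coe_coe, Function.comp_apply,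
    LinearMap.rTensor_tmul, LinearMap.mulRight_apply, TensorProduct.lid_tmul] at key
  rw [piL_repr r h, map_sum]
  simp only [map_smul]
  rw [key, Finset.sum_comm]
  refine Finset.sum_congr rfl fun j _ => ?_
  simp [Finset.mul_sum, TensorProduct.sum_tmul, mul_smul_comm, TensorProduct.smul_tmul']

/-- `ρ(Π^L(h) ⊗ a) = ρ(Π^L(h) ⊗ 1) a`. -/
lemma rho_piL (hWB : IsWeakBialgebra k H) {ρ : H ⊗[k] A →ₗ[k] A}
    (hρ : IsWeakMeasure ρ)
    (hone : ∀ a : A, ρ ((1 : H) ⊗ₜ[k] a) = a)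
    (hcomp : ∀ h g : H,
      ρ ((h * g) ⊗ₜ[k] (1 : A)) = ρ (h ⊗ₜ[k] ρ (g ⊗ₜ[k] (1 : A))))
    (r : Coalgebra.Repr k (1 : H) (H × H)) (h : H) (a : A) :
    ρ (piL k H h ⊗ₜ[k] a) = ρ (piL k H h ⊗ₜ[k] (1 : A)) * a := by
  have e1 : ρ (piL k H h ⊗ₜ[k] a)
      = ∑ j ∈ r.index, ρ ((r.left j * piL k H h) ⊗ₜ[k] (1 : A)) * ρ (r.right j ⊗ₜ[k] a) := by
    have := measure_repr hρ
      (⟨r.index, fun j => r.left j * piL k H h, r.right,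
        (comul_piL hWB r h).symm⟩ : Coalgebra.Repr k (piL k H h) (H × H)) (1 : A) a
    rw [one_mul] at this
    simpa using this
  have e2 : ρ (piL k H h ⊗ₜ[k] (1 : A)) * a
      = ∑ j ∈ r.index,
          ρ (r.left j ⊗ₜ[k] ρ (piL k H h ⊗ₜ[k] (1 : A))) * ρ (r.right j ⊗ₜ[k] a) := by
    have := measure_repr hρ r (ρ (piL k H h ⊗ₜ[k] (1 : A))) a
    rw [hone] at this
    exact this
  rw [e1, e2]
  exact Finset.sum_congr rfl fun j _ => by rw [hcomp]

/-- Pointwise form of the identity `Σ h₍₁₎ ⊗ Π^L(h₍₂₎) = Σ 1₍₁₎h ⊗ 1₍₂₎`. -/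
lemma I3_repr (hWB : IsWeakBialgebra k H) (r1 : Coalgebra.Repr k (1 : H) (H × H))
    {h : H} (r : Coalgebra.Repr k h (H × H)) :
    ∑ t ∈ r.index, r.left t ⊗ₜ[k] piL k H (r.right t)
      = ∑ i ∈ r1.index, (r1.left i * h) ⊗ₜ[k] r1.right i := by
  classical
  set ri : ∀ i : (H × H), Coalgebra.Repr k (r1.left i) (H × H) := fun i => ℛ k (r1.left i) with hri
  -- triple-sum version of A3'
  have hA : ∑ i ∈ r1.index, ∑ s ∈ (ri i).index,
        (((ri i).left s ⊗ₜ[k] (ri i).right s) ⊗ₜ[k] r1.right i)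
      = ∑ i ∈ r1.index, ∑ j ∈ r1.index,
        ((r1.left i ⊗ₜ[k] (r1.left j * r1.right i)) ⊗ₜ[k] r1.right j) := by
    rw [← comul_one_right_repr hWB r1]
    refine Finset.sum_congr rfl fun i _ => ?_
    rw [← TensorProduct.sum_tmul, (ri i).eq]
  -- Δh = Δ1 · Δh, pointwise
  have hmul : ∑ i ∈ r1.index, ∑ t ∈ r.index,
        (r1.left i * r.left t) ⊗ₜ[k] (r1.right i * r.right t)
      = (CoalgebraStruct.comul h : H ⊗[k] H) := by
    have h0 : (CoalgebraStruct.comul h : H ⊗[k] H)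
        = CoalgebraStruct.comul (1 : H) * CoalgebraStruct.comul h := by
      have := hWB.comul_mul 1 h
      rw [one_mul] at this
      exact this
    rw [h0, ← r1.eq, ← r.eq, Finset.sum_mul_sum]
    simp [Algebra.TensorProduct.tmul_mul_tmul]
  have lhs_eq : ∑ t ∈ r.index, r.left t ⊗ₜ[k] piL k H (r.right t)
      = ∑ i ∈ r1.index, ∑ t ∈ r.index,
          (r1.left i * r.left t) ⊗ₜ[k] piL k H (r1.right i * r.right t) := by
    have e1 := congrArg (LinearMap.lTensor H (piL k H)) hmul
    rw [← r.eq] at e1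
    simp only [map_sum, LinearMap.lTensor_tmul] at e1
    exact e1.symm
  rw [lhs_eq]
  -- key inner-sum identity
  have hcnt : ∀ i : (H × H), ∑ s ∈ (ri i).index, ∑ t ∈ r.index,
      counitH k H ((ri i).right s * r.right t) • ((ri i).left s * r.left t)
        = r1.left i * h := by
    intro i
    have hprod : ∑ p ∈ (ri i).index ×ˢ r.index,
        ((ri i).left p.1 * r.left p.2) ⊗ₜ[k] ((ri i).right p.1 * r.right p.2)
        = (CoalgebraStruct.comul (r1.left i * h) : H ⊗[k] H) := by
      have hm := hWB.comul_mul (r1.left i) h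
      rw [show (comulH k H : H →ₗ[k] H ⊗[k] H) = CoalgebraStruct.comul from rfl] at hm
      rw [hm, ← (ri i).eq, ← r.eq, Finset.sum_mul_sum]
      rw [Finset.sum_product]
      simp [Algebra.TensorProduct.tmul_mul_tmul]
    have hc := Coalgebra.sum_tmul_counit_eq (R := k)
      (⟨(ri i).index ×ˢ r.index,
        fun p => (ri i).left p.1 * r.left p.2,
        fun p => (ri i).right p.1 * r.right p.2, hprod⟩ : Coalgebra.Repr k (r1.left i * h) ((H × H) × (H × H)))
    have hc2 := congrArg (TensorProduct.rid k H) hc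
    simp only [map_sum, TensorProduct.rid_tmul, one_smul] at hc2
    rw [Finset.sum_product] at hc2
    exact hc2
  -- apply the Θ maps to hA for each t and sum
  have key : ∀ t : (H × H), t ∈ r.index →
      (∑ i ∈ r1.index, ∑ s ∈ (ri i).index,
        counitH k H ((ri i).right s * r.right t) • (((ri i).left s * r.left t) ⊗ₜ[k] r1.right i))
      = ∑ i ∈ r1.index, ∑ j ∈ r1.index,
          counitH k H ((r1.left j * r1.right i) * r.right t) •
            ((r1.left i * r.left t) ⊗ₜ[k] r1.right j) := by
    intro t _
    have := congrArg (LinearMap.rTensor H ((TensorProduct.rid k H).toLinearMap ∘ₗ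
      TensorProduct.map (LinearMap.mulRight k (r.left t))
        (counitH k H ∘ₗ LinearMap.mulRight k (r.right t)))) hA
    simp only [map_sum, LinearMap.rTensor_tmul, LinearMap.coe_comp, LinearEquiv.coe_coe,
      Function.comp_apply, TensorProduct.map_tmul, LinearMap.mulRight_apply,
      TensorProduct.rid_tmul, TensorProduct.smul_tmul'] at this
    exact this
  calc ∑ i ∈ r1.index, ∑ t ∈ r.index,
        (r1.left i * r.left t) ⊗ₜ[k] piL k H (r1.right i * r.right t)
      = ∑ t ∈ r.index, ∑ i ∈ r1.index, ∑ j ∈ r1.index,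
          counitH k H ((r1.left j * r1.right i) * r.right t) •
            ((r1.left i * r.left t) ⊗ₜ[k] r1.right j) := by
        rw [Finset.sum_comm]
        refine Finset.sum_congr rfl fun t _ => Finset.sum_congr rfl fun i _ => ?_
        rw [piL_repr r1 (r1.right i * r.right t)]
        rw [TensorProduct.tmul_sum]
        refine Finset.sum_congr rfl fun j _ => ?_
        rw [TensorProduct.tmul_smul, mul_assoc]
    _ = ∑ t ∈ r.index, ∑ i ∈ r1.index, ∑ s ∈ (ri i).index,
          counitH k H ((ri i).right s * r.right t) •
            (((ri i).left s * r.left t) ⊗ₜ[k] r1.right i) := by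
        refine Finset.sum_congr rfl fun t ht => (key t ht).symm
    _ = ∑ i ∈ r1.index, (∑ s ∈ (ri i).index, ∑ t ∈ r.index,
          counitH k H ((ri i).right s * r.right t) • ((ri i).left s * r.left t))
            ⊗ₜ[k] r1.right i := by
        rw [Finset.sum_comm]
        refine Finset.sum_congr rfl fun i _ => ?_
        rw [Finset.sum_comm, TensorProduct.sum_tmul]
        refine Finset.sum_congr rfl fun s _ => ?_
        rw [TensorProduct.sum_tmul]
        refine Finset.sum_congr rfl fun t _ => ?_
        rw [TensorProduct.smul_tmul']
    _ = ∑ i ∈ r1.index, (r1.left i * h) ⊗ₜ[k] r1.right i := by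
        refine Finset.sum_congr rfl fun i _ => ?_
        rw [hcnt i]

omit [Coalgebra k H] in
lemma rhoAt_apply (ρ : H ⊗[k] A →ₗ[k] A) (a : A) (x : H) :
    rhoAt ρ a x = ρ (x ⊗ₜ[k] a) := rfl

/-- `Σ u(h₍₁₎) u(Π^L(h₍₂₎)) = u(h)`. -/
lemma u_conv (hWB : IsWeakBialgebra k H) {ρ : H ⊗[k] A →ₗ[k] A}
    (hρ : IsWeakMeasure ρ)
    (hone : ∀ a : A, ρ ((1 : H) ⊗ₜ[k] a) = a)
    (hcomp : ∀ h g : H,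
      ρ ((h * g) ⊗ₜ[k] (1 : A)) = ρ (h ⊗ₜ[k] ρ (g ⊗ₜ[k] (1 : A))))
    (r1 : Coalgebra.Repr k (1 : H) (H × H)) {h : H} (r : Coalgebra.Repr k h (H × H)) :
    ∑ t ∈ r.index, ρ (r.left t ⊗ₜ[k] (1 : A)) * ρ (piL k H (r.right t) ⊗ₜ[k] (1 : A))
      = ρ (h ⊗ₜ[k] (1 : A)) := by
  have e := congrArg (LinearMap.mul' k A ∘ₗ TensorProduct.map (rhoAt ρ 1) (rhoAt ρ 1))
    (I3_repr hWB r1 r)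
  simp only [map_sum, LinearMap.coe_comp, Function.comp_apply, TensorProduct.map_tmul,
    LinearMap.mul'_apply, rhoAt_apply] at e
  rw [e]
  have e2 : ∑ i ∈ r1.index, ρ ((r1.left i * h) ⊗ₜ[k] (1 : A)) * ρ (r1.right i ⊗ₜ[k] (1 : A))
      = ∑ i ∈ r1.index,
          ρ (r1.left i ⊗ₜ[k] ρ (h ⊗ₜ[k] (1 : A))) * ρ (r1.right i ⊗ₜ[k] (1 : A)) :=
    Finset.sum_congr rfl fun i _ => by rw [hcomp]
  rw [e2, ← measure_repr hρ r1 (ρ (h ⊗ₜ[k] (1 : A))) 1, hone, mul_one]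

/-- `u(Π^L(h)) = Σ u(h₍₁₎) u(Π^L(h₍₂₎))`. -/
lemma u_piL_conv {S : H →ₗ[k] H} (hS : IsWeakHopf k H S) {ρ : H ⊗[k] A →ₗ[k] A}
    (hρ : IsWeakMeasure ρ)
    (hcomp : ∀ h g : H,
      ρ ((h * g) ⊗ₜ[k] (1 : A)) = ρ (h ⊗ₜ[k] ρ (g ⊗ₜ[k] (1 : A))))
    {h : H} (r : Coalgebra.Repr k h (H × H)) :
    ρ (piL k H h ⊗ₜ[k] (1 : A))
      = ∑ t ∈ r.index, ρ (r.left t ⊗ₜ[k] (1 : A)) * ρ (piL k H (r.right t) ⊗ₜ[k] (1 : A)) := by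
  classical
  set a₁ : ∀ t : (H × H), Coalgebra.Repr k (r.left t) (H × H) := fun t => ℛ k (r.left t) with ha₁
  set a₂ : ∀ t : (H × H), Coalgebra.Repr k (r.right t) (H × H) := fun t => ℛ k (r.right t) with ha₂
  have hco := Coalgebra.sum_tmul_tmul_eq (R := k) r a₁ a₂
  have e := congrArg (LinearMap.mul' k A ∘ₗ TensorProduct.map (rhoAt ρ 1)
      (rhoAt ρ 1 ∘ₗ (LinearMap.mul' k H ∘ₗ LinearMap.lTensor H S))) hco
  simp only [map_sum, LinearMap.coe_comp, Function.comp_apply, TensorProduct.map_tmul,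
    LinearMap.lTensor_tmul, LinearMap.mul'_apply, rhoAt_apply] at e
  -- e : ∑ t ∑ s, ρ(c_ts ⊗ 1) * ρ((d_ts * S y_t) ⊗ 1)
  --   = ∑ t ∑ s, ρ(x_t ⊗ 1) * ρ((m_ts * S n_ts) ⊗ 1)
  have lhs_eq : ρ (piL k H h ⊗ₜ[k] (1 : A))
      = ∑ t ∈ r.index, ∑ s ∈ (a₁ t).index,
          ρ ((a₁ t).left s ⊗ₜ[k] (1 : A)) *
            ρ (((a₁ t).right s * S (r.right t)) ⊗ₜ[k] (1 : A)) := by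
    rw [← antipode_left_repr hS r, TensorProduct.sum_tmul, map_sum]
    refine Finset.sum_congr rfl fun t _ => ?_
    rw [hcomp]
    have := measure_repr hρ (a₁ t) (1 : A) (ρ (S (r.right t) ⊗ₜ[k] (1 : A)))
    rw [one_mul] at this
    rw [this]
    exact Finset.sum_congr rfl fun s _ => by rw [← hcomp]
  have rhs_eq : ∑ t ∈ r.index, ∑ s ∈ (a₂ t).index,
        ρ (r.left t ⊗ₜ[k] (1 : A)) * ρ (((a₂ t).left s * S ((a₂ t).right s)) ⊗ₜ[k] (1 : A))
      = ∑ t ∈ r.index,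
          ρ (r.left t ⊗ₜ[k] (1 : A)) * ρ (piL k H (r.right t) ⊗ₜ[k] (1 : A)) := by
    refine Finset.sum_congr rfl fun t _ => ?_
    rw [← Finset.mul_sum]
    congr 1
    rw [← antipode_left_repr hS (a₂ t), TensorProduct.sum_tmul, map_sum]
  rw [lhs_eq, e, rhs_eq]

end Aux

/-- If `H` is a weak Hopf algebra and `ρ` is a weak measure
with `ρ(1⊗a) = a` and `ρ(hg⊗1) = ρ(h⊗ρ(g⊗1))`, then
`ρ(Π^L(h)⊗a) = ρ(h⊗1) a`; in particular `A` is a left weak `H`-module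
algebra via `ρ`. -/
theorem statement_8 {k : Type*} [Field k]
    {H : Type*} [Ring H] [Algebra k H] [Coalgebra k H]
    {A : Type*} [Ring A] [Algebra k A]
    (hWB : IsWeakBialgebra k H)
    (S : H →ₗ[k] H) (hS : IsWeakHopf k H S)
    (ρ : H ⊗[k] A →ₗ[k] A) (hρ : IsWeakMeasure ρ)
    (hone : ∀ a : A, ρ ((1 : H) ⊗ₜ[k] a) = a)
    (hcomp : ∀ h g : H,
      ρ ((h * g) ⊗ₜ[k] (1 : A)) = ρ (h ⊗ₜ[k] ρ (g ⊗ₜ[k] (1 : A)))) :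
    ∀ (h : H) (a : A),
      ρ (piL k H h ⊗ₜ[k] a) = ρ (h ⊗ₜ[k] (1 : A)) * a := by
  intro h a
  have hu : ρ (piL k H h ⊗ₜ[k] (1 : A)) = ρ (h ⊗ₜ[k] (1 : A)) := by
    rw [u_piL_conv hS hρ hcomp (Coalgebra.Repr.arbitrary k h),
      u_conv hWB hρ hone hcomp (Coalgebra.Repr.arbitrary k (1 : H))
        (Coalgebra.Repr.arbitrary k h)]
  rw [rho_piL hWB hρ hone hcomp (Coalgebra.Repr.arbitrary k (1 : H)) h a, hu]

end WeakCrossed
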